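/- Let A be a bounded linear operator on H. Then η(A)⁴ ≤ ‖ |A|² + |A|⁴ ‖_ber · ‖ |A*|² + |A|⁴ ‖_ber. -/

import Mathlib

open scoped InnerProductSpace
open ContinuousLinearMap

variable {H : Type*} [NormedAddCommGroup H] [InnerProductSpace ℂ H] [CompleteSpace H]
variable {Ω : Type*} [Nonempty Ω]

/-- Berezin number: `ber(T) = sup_{λ∈Ω} |⟨T k̂_λ, k̂_λ⟩|`. -/
noncomputable def ber (k : Ω → H) (T : H →L[ℂ] H) : ℝ :=
  ⨆ lam : Ω, ‖⟪T (k lam), k lam⟫_ℂ‖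

/-- Berezin norm: `‖T‖_ber = sup_{λ,μ∈Ω} |⟨T k̂_λ, k̂_μ⟩|`. -/
noncomputable def bernorm (k : Ω → H) (T : H →L[ℂ] H) : ℝ :=
  ⨆ p : Ω × Ω, ‖⟪T (k p.1), k p.2⟫_ℂ‖

/-- Least Berezin number: `c(T) = inf_{λ∈Ω} |⟨T k̂_λ, k̂_λ⟩|`. -/
noncomputable def lber (k : Ω → H) (T : H →L[ℂ] H) : ℝ :=
  ⨅ lam : Ω, ‖⟪T (k lam), k lam⟫_ℂ‖

/-- Davis-Wielandt-Berezin radius: `η(T) = sup_{λ∈Ω} √(|⟨T k̂_λ, k̂_λ⟩|² + ‖T k̂_λ‖⁴)`. -/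
noncomputable def eta (k : Ω → H) (T : H →L[ℂ] H) : ℝ :=
  ⨆ lam : Ω, Real.sqrt (‖⟪T (k lam), k lam⟫_ℂ‖ ^ 2 + ‖T (k lam)‖ ^ 4)

/-- The modulus `|A| = (A*A)^{1/2}`. -/
noncomputable def absop (A : H →L[ℂ] H) : H →L[ℂ] H := CFC.sqrt (adjoint A * A)

set_option maxHeartbeats 1000000 in
set_option synthInstance.maxHeartbeats 1000000 in
lemma absop_sq' (A : H →L[ℂ] H) : (absop A) ^ 2 = adjoint A * A :=
  CFC.sq_sqrt _ (by rw [← star_eq_adjoint]; exact star_mul_self_nonneg A)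

set_option maxHeartbeats 1000000
set_option synthInstance.maxHeartbeats 1000000

lemma bernorm_bound' (k : Ω → H) (hk : ∀ lam, ‖k lam‖ = 1) (T : H →L[ℂ] H) (lam : Ω) :
    ‖⟪T (k lam), k lam⟫_ℂ‖ ≤ bernorm k T := by
  have hb : BddAbove (Set.range fun p : Ω × Ω => ‖⟪T (k p.1), k p.2⟫_ℂ‖) := by
    refine ⟨‖T‖, ?_⟩
    rintro y ⟨p, rfl⟩
    calc ‖⟪T (k p.1), k p.2⟫_ℂ‖ ≤ ‖T (k p.1)‖ * ‖k p.2‖ := norm_inner_le_norm _ _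
      _ ≤ (‖T‖ * ‖k p.1‖) * ‖k p.2‖ :=
          mul_le_mul_of_nonneg_right (T.le_opNorm (k p.1)) (norm_nonneg _)
      _ = ‖T‖ := by rw [hk, hk]; ring
  exact le_ciSup hb (lam, lam)

theorem stmt10 (k : Ω → H) (hk : ∀ lam, ‖k lam‖ = 1) (A : H →L[ℂ] H) :
    (eta k A) ^ 4 ≤
      bernorm k ((absop A) ^ 2 + (absop A) ^ 4) *
        bernorm k ((absop (adjoint A)) ^ 2 + (absop A) ^ 4) := by
  set T1 := (absop A) ^ 2 + (absop A) ^ 4 with hT1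
  set T2 := (absop (adjoint A)) ^ 2 + (absop A) ^ 4 with hT2
  set b1 := bernorm k T1 with hb1def
  set b2 := bernorm k T2 with hb2def
  have hb1 : 0 ≤ b1 :=
    le_trans (norm_nonneg _) (bernorm_bound' k hk T1 (Classical.arbitrary Ω))
  have hb2 : 0 ≤ b2 :=
    le_trans (norm_nonneg _) (bernorm_bound' k hk T2 (Classical.arbitrary Ω))
  have hA2 : (absop A) ^ 2 = adjoint A * A := absop_sq' A
  have hA4 : (absop A) ^ 4 = (adjoint A * A) ^ 2 := by
    rw [show (4:ℕ) = 2*2 from rfl, pow_mul, hA2]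
  have hB2 : (absop (adjoint A)) ^ 2 = A * adjoint A := by
    rw [absop_sq' (adjoint A), adjoint_adjoint]
  have hsa : adjoint (adjoint A * A) = adjoint A * A := by
    rw [← star_eq_adjoint (adjoint A * A), star_mul, ← star_eq_adjoint A, star_star,
      star_eq_adjoint]
  have key : ∀ lam : Ω,
      Real.sqrt (‖⟪A (k lam), k lam⟫_ℂ‖ ^ 2 + ‖A (k lam)‖ ^ 4) ≤
        Real.sqrt (Real.sqrt (b1 * b2)) := by
    intro lam
    set x := k lam with hx
    have hx1 : ‖x‖ = 1 := hk lam
    set a := ‖A x‖ with ha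
    set b := ‖adjoint A x‖ with hbdef
    set s := ‖(adjoint A * A) x‖ with hs
    have ha0 : 0 ≤ a := norm_nonneg _
    have hb0 : 0 ≤ b := norm_nonneg _
    have hs0 : 0 ≤ s := norm_nonneg _
    set n := ‖⟪A x, x⟫_ℂ‖ with hn
    have hn0 : 0 ≤ n := norm_nonneg _
    have hna : n ≤ a := by
      calc n ≤ ‖A x‖ * ‖x‖ := norm_inner_le_norm _ _
        _ = a := by rw [hx1, mul_one]
    have hnb : n ≤ b := by
      have h : ⟪A x, x⟫_ℂ = ⟪x, adjoint A x⟫_ℂ := (adjoint_inner_right A x x).symm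
      calc n = ‖⟪x, adjoint A x⟫_ℂ‖ := by rw [hn, h]
        _ ≤ ‖x‖ * ‖adjoint A x‖ := norm_inner_le_norm _ _
        _ = b := by rw [hx1, one_mul]
    have ra : RCLike.re ⟪(adjoint A * A) x, x⟫_ℂ = a ^ 2 := by
      have e1 : ⟪(adjoint A * A) x, x⟫_ℂ = ⟪A x, A x⟫_ℂ := by
        rw [ContinuousLinearMap.mul_apply]; exact adjoint_inner_left A x (A x)
      rw [e1]; exact inner_self_eq_norm_sq (A x)
    have rb : RCLike.re ⟪(A * adjoint A) x, x⟫_ℂ = b ^ 2 := by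
      have e2 : ⟪(A * adjoint A) x, x⟫_ℂ = ⟪adjoint A x, adjoint A x⟫_ℂ := by
        rw [ContinuousLinearMap.mul_apply]; exact (adjoint_inner_right A (adjoint A x) x).symm
      rw [e2]; exact inner_self_eq_norm_sq (adjoint A x)
    have rs : RCLike.re ⟪((adjoint A * A) ^ 2) x, x⟫_ℂ = s ^ 2 := by
      have e3 := adjoint_inner_left (adjoint A * A) x ((adjoint A * A) x)
      rw [hsa] at e3
      have e4 : ⟪((adjoint A * A) ^ 2) x, x⟫_ℂ
          = ⟪(adjoint A * A) x, (adjoint A * A) x⟫_ℂ := by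
        rw [pow_two, ContinuousLinearMap.mul_apply]; exact e3
      rw [e4]; exact inner_self_eq_norm_sq ((adjoint A * A) x)
    have h4 : a ^ 2 ≤ s := by
      calc a ^ 2 = RCLike.re ⟪(adjoint A * A) x, x⟫_ℂ := ra.symm
        _ ≤ ‖⟪(adjoint A * A) x, x⟫_ℂ‖ := RCLike.re_le_norm _
        _ ≤ ‖(adjoint A * A) x‖ * ‖x‖ := norm_inner_le_norm _ _
        _ = s := by rw [hx1, mul_one]
    have rT1 : RCLike.re ⟪T1 x, x⟫_ℂ = a ^ 2 + s ^ 2 := by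
      rw [hT1, hA2, hA4, add_apply, inner_add_left, map_add, ra, rs]
    have rT2 : RCLike.re ⟪T2 x, x⟫_ℂ = b ^ 2 + s ^ 2 := by
      rw [hT2, hB2, hA4, add_apply, inner_add_left, map_add, rb, rs]
    have hT1b : a ^ 2 + s ^ 2 ≤ b1 := by
      rw [← rT1]
      exact le_trans (RCLike.re_le_norm _) (bernorm_bound' k hk T1 lam)
    have hT2b : b ^ 2 + s ^ 2 ≤ b2 := by
      rw [← rT2]
      exact le_trans (RCLike.re_le_norm _) (bernorm_bound' k hk T2 lam)
    have step1 : n ^ 2 + a ^ 4 ≤ a * b + s * s := by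
      have h1 : n ^ 2 ≤ a * b := by
        calc n ^ 2 = n * n := sq n
          _ ≤ a * b := mul_le_mul hna hnb hn0 ha0
      have h2 : a ^ 4 ≤ s * s := by nlinarith [sq_nonneg a]
      linarith
    have step2 : a * b + s * s ≤ Real.sqrt ((a ^ 2 + s ^ 2) * (b ^ 2 + s ^ 2)) :=
      Real.le_sqrt_of_sq_le (by nlinarith [sq_nonneg (a*s - b*s)])
    have step3 : Real.sqrt ((a ^ 2 + s ^ 2) * (b ^ 2 + s ^ 2)) ≤ Real.sqrt (b1 * b2) :=
      Real.sqrt_le_sqrt (mul_le_mul hT1b hT2b (by positivity) hb1)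
    exact Real.sqrt_le_sqrt (le_trans step1 (le_trans step2 step3))
  have heta_le : eta k A ≤ Real.sqrt (Real.sqrt (b1 * b2)) := ciSup_le key
  have heta0 : 0 ≤ eta k A := Real.iSup_nonneg fun lam => Real.sqrt_nonneg _
  have hfin : (Real.sqrt (Real.sqrt (b1 * b2))) ^ 4 = b1 * b2 := by
    rw [show (4:ℕ) = 2*2 from rfl, pow_mul, Real.sq_sqrt (Real.sqrt_nonneg _),
      Real.sq_sqrt (mul_nonneg hb1 hb2)]
  calc (eta k A) ^ 4 ≤ (Real.sqrt (Real.sqrt (b1 * b2))) ^ 4 :=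
        pow_le_pow_left₀ heta0 heta_le 4
    _ = b1 * b2 := hfin
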